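/- Let n and k be integers with k ≥ 5 and n ≥ 2k². If (k−2)·log₂ n < k(k−1)/2 − 4·log₂ k − 0.71, then there exists a tournament on n vertices containing no transitive subtournament on k vertices. (This is the explicit sufficient condition derived in the proof of Theorem 4.2, giving F(n) < 2log₂ n − 1 + o(1).) -/

import Mathlib

open Finset
open scoped Classical

set_option linter.unusedSectionVars false
set_option linter.unusedVariables false
set_option maxHeartbeats 1000000
set_option maxRecDepth 4000

/-- A tournament on `{0,…,r-1}`: loopless, and for every pair of distinct
vertices exactly one of the two possible arcs is present. -/
structure Tournament (r : ℕ) where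
  arc : Fin r → Fin r → Bool
  loopless : ∀ i, arc i i = false
  oneOf : ∀ i j, i ≠ j → (arc i j = true ↔ ¬ arc j i = true)

/-- `S` carries a transitive subtournament: there is a linear ordering of `S` such
that the arc `(u,v)` is present whenever `u` precedes `v`. -/
def Tournament.HasTransTournOn {r : ℕ} (T : Tournament r) (S : Finset (Fin r)) : Prop :=
  ∃ l : List (Fin r), l.Nodup ∧ l.toFinset = S ∧
    l.Pairwise fun u v => T.arc u v = true

section LLL

variable {ι κ : Type*} [Fintype ι] [DecidableEq ι] [Fintype κ] [DecidableEq κ]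

/-- merge: take values from `a` on `s`, from `b` off `s`. -/
noncomputable def mrg (s : Finset ι) (a b : ι → Bool) : ι → Bool :=
  fun p => if p ∈ s then a p else b p

lemma mrg_mem {s : Finset ι} {a b : ι → Bool} {p : ι} (hp : p ∈ s) : mrg s a b p = a p :=
  if_pos hp

lemma mrg_not_mem {s : Finset ι} {a b : ι → Bool} {p : ι} (hp : p ∉ s) : mrg s a b p = b p :=
  if_neg hp

/-- Independence of events determined by disjoint coordinate sets, as counting. -/
lemma indep_card (A B : Finset (ι → Bool)) (s : Finset ι)
    (hA : ∀ ω ω' : ι → Bool, (∀ p ∈ s, ω p = ω' p) → (ω ∈ A ↔ ω' ∈ A))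
    (hB : ∀ ω ω' : ι → Bool, (∀ p ∉ s, ω p = ω' p) → (ω ∈ B ↔ ω' ∈ B)) :
    (A ∩ B).card * 2 ^ (Fintype.card ι) = A.card * B.card := by
  have key : ((A ∩ B) ×ˢ (univ : Finset (ι → Bool))).card = (A ×ˢ B).card := by
    refine (Finset.card_nbij' (fun z => (mrg s z.1 z.2, mrg s z.2 z.1))
      (fun z => (mrg s z.1 z.2, mrg s z.2 z.1)) ?_ ?_ ?_ ?_).symm
    · rintro ⟨a, b⟩ hab
      rw [Finset.mem_coe, Finset.mem_product] at hab
      obtain ⟨ha, hb⟩ := hab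
      rw [Finset.mem_coe, Finset.mem_product]
      refine ⟨Finset.mem_inter.2 ⟨?_, ?_⟩, Finset.mem_univ _⟩
      · exact (hA a _ (fun p hp => (mrg_mem hp).symm)).1 ha
      · exact (hB b _ (fun p hp => (mrg_not_mem hp).symm)).1 hb
    · rintro ⟨c, d⟩ hcd
      rw [Finset.mem_coe, Finset.mem_product] at hcd
      obtain ⟨hc, _⟩ := hcd
      rw [Finset.mem_inter] at hc
      rw [Finset.mem_coe, Finset.mem_product]
      constructor
      · exact (hA c _ (fun p hp => (mrg_mem hp).symm)).1 hc.1
      · exact (hB c _ (fun p hp => (mrg_not_mem hp).symm)).1 hc.2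
    · rintro ⟨a, b⟩ _
      ext p <;> by_cases hp : p ∈ s <;>
        simp [mrg_mem, mrg_not_mem, hp]
    · rintro ⟨c, d⟩ _
      ext p <;> by_cases hp : p ∈ s <;>
        simp [mrg_mem, mrg_not_mem, hp]
  rw [Finset.card_product, Finset.card_product, Finset.card_univ] at key
  rw [← key]
  congr 1
  rw [Fintype.card_fun, Fintype.card_bool]

/-- events pinned on a coordinate set `s` have few elements. -/
lemma cylinder_card_le (A : Finset (ι → Bool)) (s : Finset ι)
    (hpin : ∀ ω ∈ A, ∀ ω' ∈ A, ∀ p ∈ s, ω p = ω' p) :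
    A.card * 2 ^ s.card ≤ 2 ^ (Fintype.card ι) := by
  classical
  have hinj : ∀ ω ∈ A, ∀ ω' ∈ A,
      (fun q : {p // p ∈ sᶜ} => ω q.1) = (fun q : {p // p ∈ sᶜ} => ω' q.1) → ω = ω' := by
    intro ω hω ω' hω' hfun
    funext p
    by_cases hp : p ∈ s
    · exact hpin ω hω ω' hω' p hp
    · have : p ∈ sᶜ := Finset.mem_compl.2 hp
      exact congrFun hfun ⟨p, this⟩
  have hle : A.card ≤ Fintype.card ({p // p ∈ sᶜ} → Bool) := by
    rw [← Finset.card_univ]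
    exact Finset.card_le_card_of_injOn _ (fun ω _ => Finset.mem_univ _) hinj
  have hcard : Fintype.card ({p // p ∈ sᶜ} → Bool) = 2 ^ (Fintype.card ι - s.card) := by
    rw [Fintype.card_fun, Fintype.card_bool, Fintype.card_coe, Finset.card_compl]
  rw [hcard] at hle
  calc A.card * 2 ^ s.card ≤ 2 ^ (Fintype.card ι - s.card) * 2 ^ s.card :=
        Nat.mul_le_mul_right _ hle
    _ = 2 ^ (Fintype.card ι) := by
        rw [← pow_add]
        congr 1
        exact Nat.sub_add_cancel (by simpa using Finset.card_le_card (Finset.subset_univ s))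

noncomputable def avoidSet (A : κ → Finset (ι → Bool)) (S : Finset κ) : Finset (ι → Bool) :=
  univ.filter (fun ω => ∀ j ∈ S, ω ∉ A j)

lemma avoidSet_anti {A : κ → Finset (ι → Bool)} {S S' : Finset κ} (h : S ⊆ S') :
    avoidSet A S' ⊆ avoidSet A S := by
  intro ω hω
  simp only [avoidSet, Finset.mem_filter] at *
  exact ⟨hω.1, fun j hj => hω.2 j (h hj)⟩

lemma avoidSet_card_drop (A : κ → Finset (ι → Bool)) (S : Finset κ) (j : κ) :
    (avoidSet A S).card ≤ (avoidSet A (insert j S)).card + (A j ∩ avoidSet A S).card := by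
  have hsub : avoidSet A S ⊆ avoidSet A (insert j S) ∪ (A j ∩ avoidSet A S) := by
    intro ω hω
    by_cases hj : ω ∈ A j
    · exact Finset.mem_union_right _ (Finset.mem_inter.2 ⟨hj, hω⟩)
    · refine Finset.mem_union_left _ ?_
      simp only [avoidSet, Finset.mem_filter] at *
      refine ⟨hω.1, fun i hi => ?_⟩
      rcases Finset.mem_insert.1 hi with rfl | hi
      · exact hj
      · exact hω.2 i hi
  exact le_trans (Finset.card_le_card hsub) (Finset.card_union_le _ _)

section Main

variable (A : κ → Finset (ι → Bool)) (vbl : κ → Finset ι)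
  (hdet : ∀ i, ∀ ω ω' : ι → Bool, (∀ p ∈ vbl i, ω p = ω' p) → (ω ∈ A i ↔ ω' ∈ A i))
  (D : ℕ) (x : ℝ) (hx0 : 0 < x) (hx1 : x < 1)
  (hN : ∀ i, (univ.filter (fun j => (vbl i ∩ vbl j).Nonempty)).card ≤ D)
  (hp : ∀ i, ((A i).card : ℝ) ≤ x * (1 - x) ^ D * 2 ^ (Fintype.card ι))

include hdet hx0 hx1 hN hp in
lemma lll_partA : ∀ m : ℕ, ∀ S : Finset κ, S.card ≤ m → ∀ i,
    ((A i ∩ avoidSet A S).card : ℝ) ≤ x * (avoidSet A S).card := by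
  intro m
  induction m with
  | zero =>
      intro S hS i
      have hS0 : S = ∅ := Finset.card_eq_zero.1 (Nat.le_zero.1 hS)
      subst hS0
      have huniv : avoidSet A (∅ : Finset κ) = univ := by simp [avoidSet]
      rw [huniv]
      have h2 : ((A i ∩ univ).card : ℝ) = (A i).card := by rw [Finset.inter_univ]
      rw [h2, Finset.card_univ, Fintype.card_fun, Fintype.card_bool]
      calc ((A i).card : ℝ) ≤ x * (1 - x) ^ D * 2 ^ (Fintype.card ι) := hp i
        _ ≤ x * 1 * 2 ^ (Fintype.card ι) := by
            gcongr
            exact pow_le_one₀ (by linarith) (by linarith)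
        _ = x * (2 ^ Fintype.card ι : ℕ) := by push_cast; ring
  | succ m IH =>
      intro S hS i
      set N : Finset κ := univ.filter (fun j => (vbl i ∩ vbl j).Nonempty) with hNdef
      set S₁ : Finset κ := S ∩ N with hS₁def
      set S₂ : Finset κ := S \ N with hS₂def
      have hS₂sub : S₂ ⊆ S := Finset.sdiff_subset
      have hS₁sub : S₁ ⊆ S := Finset.inter_subset_left
      -- independence bound
      have hiffS₂ : ∀ ω ω' : ι → Bool, (∀ p ∉ vbl i, ω p = ω' p) →
          (ω ∈ avoidSet A S₂ ↔ ω' ∈ avoidSet A S₂) := by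
        intro ω ω' hagree
        have hjiff : ∀ j ∈ S₂, (ω ∈ A j ↔ ω' ∈ A j) := by
          intro j hj
          have hjN : j ∉ N := (Finset.mem_sdiff.1 hj).2
          refine hdet j ω ω' ?_
          intro p hp
          refine hagree p (fun hpi => hjN ?_)
          exact Finset.mem_filter.2 ⟨Finset.mem_univ _, ⟨p, Finset.mem_inter.2 ⟨hpi, hp⟩⟩⟩
        simp only [avoidSet, Finset.mem_filter, Finset.mem_univ, true_and]
        exact ⟨fun hf j hj hm => hf j hj ((hjiff j hj).2 hm),
               fun hf j hj hm => hf j hj ((hjiff j hj).1 hm)⟩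
      have hindep : ((A i ∩ avoidSet A S₂).card : ℝ) * 2 ^ (Fintype.card ι)
          = (A i).card * (avoidSet A S₂).card := by
        exact_mod_cast congrArg (fun t : ℕ => (t : ℝ))
          (indep_card (A i) (avoidSet A S₂) (vbl i) (hdet i) hiffS₂)
      have h2pos : (0:ℝ) < 2 ^ (Fintype.card ι) := by positivity
      have hstep1 : ((A i ∩ avoidSet A S₂).card : ℝ)
          ≤ x * (1 - x) ^ D * (avoidSet A S₂).card := by
        have h1 : ((A i ∩ avoidSet A S₂).card : ℝ)
            = (A i).card * (avoidSet A S₂).card / 2 ^ (Fintype.card ι) := by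
          field_simp at hindep ⊢
          linarith [hindep]
        rw [h1]
        rw [div_le_iff₀ h2pos]
        calc ((A i).card : ℝ) * (avoidSet A S₂).card
            ≤ (x * (1 - x) ^ D * 2 ^ (Fintype.card ι)) * (avoidSet A S₂).card := by
              have := hp i
              have hnn : (0:ℝ) ≤ ((avoidSet A S₂).card : ℝ) := Nat.cast_nonneg _
              nlinarith
          _ = x * (1 - x) ^ D * (avoidSet A S₂).card * 2 ^ (Fintype.card ι) := by ring
      -- peeling: card of avoid (S₂ ∪ S₁') ≥ (1-x)^|S₁'| * card avoid S₂
      have hpeel : ∀ S₁' : Finset κ, S₁' ⊆ S₁ →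
          ((1 - x) ^ S₁'.card * (avoidSet A S₂).card : ℝ)
            ≤ ((avoidSet A (S₂ ∪ S₁')).card : ℝ) := by
        intro S₁'
        induction S₁' using Finset.induction_on with
        | empty => intro _; simp
        | @insert j S₁'' hj IH2 =>
            intro hsub
            have hjS₁ : j ∈ S₁ := hsub (Finset.mem_insert_self _ _)
            have hsub'' : S₁'' ⊆ S₁ := (Finset.subset_insert _ _).trans hsub
            have hIH2 := IH2 hsub''
            -- the set T := S₂ ∪ S₁'' has card ≤ m
            have hTsub : S₂ ∪ S₁'' ⊆ S := Finset.union_subset hS₂sub (hsub''.trans hS₁sub)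
            have hjT : j ∉ S₂ ∪ S₁'' := by
              intro hmem
              rcases Finset.mem_union.1 hmem with hmem | hmem
              · exact (Finset.mem_sdiff.1 hmem).2 ((Finset.mem_inter.1 hjS₁).2)
              · exact hj hmem
            have hcardT : (S₂ ∪ S₁'').card ≤ m := by
              have hss : S₂ ∪ S₁'' ⊂ S :=
                Finset.ssubset_iff_of_subset hTsub |>.2 ⟨j, hS₁sub hjS₁, hjT⟩
              have := Finset.card_lt_card hss
              omega
            have hAj := IH (S₂ ∪ S₁'') hcardT j
            have hdrop := avoidSet_card_drop A (S₂ ∪ S₁'') j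
            have hins : S₂ ∪ insert j S₁'' = insert j (S₂ ∪ S₁'') :=
              Finset.union_insert _ _ _
            rw [hins, Finset.card_insert_of_notMem hj]
            have hdropR : ((avoidSet A (S₂ ∪ S₁'')).card : ℝ)
                ≤ (avoidSet A (insert j (S₂ ∪ S₁''))).card
                  + (A j ∩ avoidSet A (S₂ ∪ S₁'')).card := by exact_mod_cast hdrop
            have hx1' : (0:ℝ) ≤ 1 - x := by linarith
            calc (1 - x) ^ (S₁''.card + 1) * ((avoidSet A S₂).card : ℝ)
                = (1 - x) * ((1 - x) ^ S₁''.card * (avoidSet A S₂).card) := by ring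
              _ ≤ (1 - x) * (avoidSet A (S₂ ∪ S₁'')).card := by
                  exact mul_le_mul_of_nonneg_left hIH2 hx1'
              _ = (avoidSet A (S₂ ∪ S₁'')).card - x * (avoidSet A (S₂ ∪ S₁'')).card := by ring
              _ ≤ (avoidSet A (insert j (S₂ ∪ S₁''))).card := by linarith
      have hS₁S : S₂ ∪ S₁ = S := by
        ext t; simp only [Finset.mem_union, hS₂def, hS₁def, Finset.mem_sdiff, Finset.mem_inter]
        tauto
      have hpeelS := hpeel S₁ (le_refl _)
      rw [hS₁S] at hpeelS
      -- |S₁| ≤ D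
      have hcardS₁ : S₁.card ≤ D := le_trans (Finset.card_le_card Finset.inter_subset_right) (hN i)
      have hx1' : (0:ℝ) ≤ 1 - x := by linarith
      have hpow : ((1 - x) ^ D : ℝ) ≤ (1 - x) ^ S₁.card :=
        pow_le_pow_of_le_one hx1' (by linarith) hcardS₁
      have hfinal : ((1 - x) ^ D * (avoidSet A S₂).card : ℝ) ≤ (avoidSet A S).card := by
        calc ((1 - x) ^ D * (avoidSet A S₂).card : ℝ)
            ≤ (1 - x) ^ S₁.card * (avoidSet A S₂).card := by
              exact mul_le_mul_of_nonneg_right hpow (Nat.cast_nonneg _)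
          _ ≤ (avoidSet A S).card := hpeelS
      have hmono : ((A i ∩ avoidSet A S).card : ℝ) ≤ ((A i ∩ avoidSet A S₂).card : ℝ) := by
        exact_mod_cast Finset.card_le_card
          (Finset.inter_subset_inter (le_refl _) (avoidSet_anti hS₂sub))
      calc ((A i ∩ avoidSet A S).card : ℝ) ≤ (A i ∩ avoidSet A S₂).card := hmono
        _ ≤ x * (1 - x) ^ D * (avoidSet A S₂).card := hstep1
        _ = x * ((1 - x) ^ D * (avoidSet A S₂).card) := by ring
        _ ≤ x * (avoidSet A S).card := by
            exact mul_le_mul_of_nonneg_left hfinal (le_of_lt hx0)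

include hdet hx0 hx1 hN hp in
lemma lll_partB : ∀ S : Finset κ,
    ((1 - x) ^ S.card * 2 ^ (Fintype.card ι) : ℝ) ≤ ((avoidSet A S).card : ℝ) := by
  intro S
  induction S using Finset.induction_on with
  | empty =>
      simp only [Finset.card_empty, pow_zero, one_mul]
      have huniv : avoidSet A (∅ : Finset κ) = univ := by simp [avoidSet]
      rw [huniv, Finset.card_univ, Fintype.card_fun, Fintype.card_bool]
      push_cast
      exact le_refl _
  | @insert j S hj IH =>
      have hAj := lll_partA A vbl hdet D x hx0 hx1 hN hp S.card S (le_refl _) j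
      have hdrop := avoidSet_card_drop A S j
      have hdropR : ((avoidSet A S).card : ℝ)
          ≤ (avoidSet A (insert j S)).card + (A j ∩ avoidSet A S).card := by exact_mod_cast hdrop
      rw [Finset.card_insert_of_notMem hj]
      have hx1' : (0:ℝ) ≤ 1 - x := by linarith
      calc ((1 - x) ^ (S.card + 1) * 2 ^ (Fintype.card ι) : ℝ)
          = (1 - x) * ((1 - x) ^ S.card * 2 ^ (Fintype.card ι)) := by ring
        _ ≤ (1 - x) * (avoidSet A S).card := mul_le_mul_of_nonneg_left IH hx1'
        _ = (avoidSet A S).card - x * (avoidSet A S).card := by ring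
        _ ≤ (avoidSet A (insert j S)).card := by linarith

include hdet hx0 hx1 hN hp in
lemma lll_exists : ∃ ω : ι → Bool, ∀ i, ω ∉ A i := by
  have hB := lll_partB A vbl hdet D x hx0 hx1 hN hp (univ : Finset κ)
  have hpos : (0:ℝ) < (1 - x) ^ (univ : Finset κ).card * 2 ^ (Fintype.card ι) := by
    apply mul_pos
    · exact pow_pos (by linarith) _
    · positivity
  have : (0:ℝ) < ((avoidSet A (univ : Finset κ)).card : ℝ) := lt_of_lt_of_le hpos hB
  have hcard : 0 < (avoidSet A (univ : Finset κ)).card := by exact_mod_cast this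
  obtain ⟨ω, hω⟩ := Finset.card_pos.1 hcard
  simp only [avoidSet, Finset.mem_filter] at hω
  exact ⟨ω, fun i => hω.2 i (Finset.mem_univ i)⟩

end Main

end LLL

section App

variable {n k : ℕ}

def sortPair (a b : Fin n) : Fin n × Fin n := if a < b then (a, b) else (b, a)

def arcOf (ω : Fin n × Fin n → Bool) (a b : Fin n) : Bool :=
  if a < b then ω (a, b) else if b < a then !ω (b, a) else false

lemma sortPair_cases (a b : Fin n) :
    sortPair a b = (a, b) ∨ sortPair a b = (b, a) := by
  unfold sortPair; split_ifs <;> simp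

lemma sortPair_eq_iff {a b : Fin n} (p : Fin n × Fin n) (h : sortPair a b = p) :
    (a = p.1 ∧ b = p.2) ∨ (a = p.2 ∧ b = p.1) := by
  unfold sortPair at h
  split_ifs at h <;> subst h <;> simp

lemma arcOf_depends {ω ω' : Fin n × Fin n → Bool} {a b : Fin n} (hab : a ≠ b)
    (h : ω (sortPair a b) = ω' (sortPair a b)) : arcOf ω a b = arcOf ω' a b := by
  rcases lt_or_gt_of_ne hab with hlt | hgt
  · have hs : sortPair a b = (a, b) := if_pos hlt
    rw [hs] at h
    simp [arcOf, hlt, h]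
  · have hs : sortPair a b = (b, a) := if_neg (not_lt_of_gt hgt)
    rw [hs] at h
    simp [arcOf, hgt, not_lt_of_gt hgt, h]

lemma arcOf_pins {ω ω' : Fin n × Fin n → Bool} {a b : Fin n} (hab : a < b)
    (h1 : arcOf ω a b = true) (h2 : arcOf ω' a b = true) :
    ω (sortPair a b) = ω' (sortPair a b) := by
  have hs : sortPair a b = (a, b) := if_pos hab
  rw [hs]
  simp only [arcOf, if_pos hab] at h1 h2
  rw [h1, h2]

/-- the tournament determined by a sample -/
def tournOf (ω : Fin n × Fin n → Bool) : Tournament n where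
  arc := arcOf ω
  loopless := fun i => by simp [arcOf]
  oneOf := fun i j hij => by
    rcases lt_or_gt_of_ne hij with hlt | hgt
    · simp only [arcOf, if_pos hlt, if_neg (not_lt_of_gt hlt), if_neg (lt_irrefl j)]
      cases h : ω (i, j) <;> simp [h]
    · simp only [arcOf, if_neg (not_lt_of_gt hgt), if_pos hgt]
      cases h : ω (j, i) <;> simp

def pairsLt (k : ℕ) : Finset (Fin k × Fin k) := univ.filter (fun q => q.1 < q.2)

lemma pairsLt_card : (pairsLt k).card = k.choose 2 := by
  have hswap : (pairsLt k).image Prod.swap = univ.filter (fun q : Fin k × Fin k => q.2 < q.1) := by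
    ext q
    simp only [Finset.mem_image, pairsLt, Finset.mem_filter, Finset.mem_univ, true_and]
    constructor
    · rintro ⟨r, hr, rfl⟩; exact hr
    · intro hq; exact ⟨q.swap, hq, by simp⟩
  have hdisj : Disjoint (pairsLt k) ((pairsLt k).image Prod.swap) := by
    rw [hswap]
    refine Finset.disjoint_left.2 ?_
    intro q hq hq'
    simp only [pairsLt, Finset.mem_filter] at hq hq'
    exact absurd hq'.2 (not_lt_of_gt hq.2)
  have hunion : pairsLt k ∪ (pairsLt k).image Prod.swap = (univ : Finset (Fin k)).offDiag := by
    rw [hswap]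
    ext q
    simp only [Finset.mem_union, pairsLt, Finset.mem_filter, Finset.mem_univ, true_and,
      Finset.mem_offDiag]
    constructor
    · rintro (h | h)
      · exact ne_of_lt h
      · exact (ne_of_lt h).symm
    · intro h
      exact lt_or_gt_of_ne h
  have hcard2 : 2 * (pairsLt k).card = k * k - k := by
    have h1 := Finset.card_union_of_disjoint hdisj
    rw [hunion] at h1
    rw [Finset.offDiag_card, Finset.card_univ, Fintype.card_fin] at h1
    rw [Finset.card_image_of_injective _ Prod.swap_injective] at h1
    omega
  have heven : 2 * k.choose 2 = k * k - k := by
    rcases Nat.eq_zero_or_pos k with rfl | hk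
    · simp
    · have := Nat.choose_two_right k
      have h2 : 2 ∣ k * (k - 1) := by
        rcases Nat.even_or_odd k with he | ho
        · exact Dvd.dvd.mul_right he.two_dvd _
        · have : Even (k - 1) := by
            rcases ho with ⟨m, rfl⟩; exact ⟨m, by omega⟩
          exact Dvd.dvd.mul_left this.two_dvd _
      rw [this, Nat.mul_div_cancel' h2]
      cases k with
      | zero => simp
      | succ m => simp [Nat.succ_sub_one]; ring_nf; omega
  omega

variable (n k)

def vblOf (e : Fin k ↪ Fin n) : Finset (Fin n × Fin n) :=
  (pairsLt k).image (fun q => sortPair (e q.1) (e q.2))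

def evA (e : Fin k ↪ Fin n) : Finset ((Fin n × Fin n) → Bool) :=
  univ.filter (fun ω => ∀ i j : Fin k, i < j → arcOf ω (e i) (e j) = true)

variable {n k}

lemma evA_det (e : Fin k ↪ Fin n) (ω ω' : (Fin n × Fin n) → Bool)
    (hagree : ∀ p ∈ vblOf n k e, ω p = ω' p) : (ω ∈ evA n k e ↔ ω' ∈ evA n k e) := by
  have key : ∀ i j : Fin k, i < j → (arcOf ω (e i) (e j) = arcOf ω' (e i) (e j)) := by
    intro i j hij
    have hne : e i ≠ e j := fun hh => (ne_of_lt hij) (e.injective hh)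
    refine arcOf_depends hne (hagree _ ?_)
    exact Finset.mem_image.2 ⟨(i, j), Finset.mem_filter.2 ⟨Finset.mem_univ _, hij⟩, rfl⟩
  simp only [evA, Finset.mem_filter, Finset.mem_univ, true_and]
  constructor
  · intro hf i j hij; rw [← key i j hij]; exact hf i j hij
  · intro hf i j hij; rw [key i j hij]; exact hf i j hij

lemma evA_pinned (e : Fin k ↪ Fin n) :
    ∀ ω ∈ evA n k e, ∀ ω' ∈ evA n k e, ∀ p ∈ vblOf n k e, ω p = ω' p := by
  intro ω hω ω' hω' p hp
  obtain ⟨q, hq, rfl⟩ := Finset.mem_image.1 hp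
  simp only [pairsLt, Finset.mem_filter] at hq
  have hab : e q.1 < e q.2 ∨ e q.2 < e q.1 :=
    lt_or_gt_of_ne (fun hh => (ne_of_lt hq.2) (e.injective hh))
  simp only [evA, Finset.mem_filter, Finset.mem_univ, true_and] at hω hω'
  have h1 := hω q.1 q.2 hq.2
  have h2 := hω' q.1 q.2 hq.2
  rcases hab with hlt | hgt
  · exact arcOf_pins hlt h1 h2
  · -- e q.1 > e q.2 : sortPair = (e q.2, e q.1), arcOf reads negated coordinate
    have hs : sortPair (e q.1) (e q.2) = (e q.2, e q.1) := if_neg (not_lt_of_gt hgt)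
    rw [hs]
    simp only [arcOf, if_neg (not_lt_of_gt hgt), if_pos hgt] at h1 h2
    have b1 : ω (e q.2, e q.1) = false := by
      cases hb : ω (e q.2, e q.1) <;> simp [hb] at h1 ⊢
    have b2 : ω' (e q.2, e q.1) = false := by
      cases hb : ω' (e q.2, e q.1) <;> simp [hb] at h2 ⊢
    rw [b1, b2]

lemma vblOf_card (e : Fin k ↪ Fin n) : (vblOf n k e).card = k.choose 2 := by
  rw [vblOf, Finset.card_image_of_injOn, pairsLt_card]
  intro q hq q' hq' heq
  simp only [Finset.mem_coe, pairsLt, Finset.mem_filter] at hq hq'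
  simp only at heq
  rcases sortPair_cases (e q'.1) (e q'.2) with hp | hp <;> rw [hp] at heq <;>
    rcases sortPair_eq_iff _ heq with ⟨h1, h2⟩ | ⟨h1, h2⟩ <;> simp only at h1 h2
  · exact Prod.ext (e.injective h1) (e.injective h2)
  · exfalso
    have e1 : q.1 = q'.2 := e.injective h1
    have e2 : q.2 = q'.1 := e.injective h2
    have hcon : q'.2 < q'.1 := by rw [← e1, ← e2]; exact hq.2
    exact absurd hcon (not_lt_of_gt hq'.2)
  · exfalso
    have e1 : q.1 = q'.2 := e.injective h1
    have e2 : q.2 = q'.1 := e.injective h2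
    have hcon : q'.2 < q'.1 := by rw [← e1, ← e2]; exact hq.2
    exact absurd hcon (not_lt_of_gt hq'.2)
  · exact Prod.ext (e.injective h1) (e.injective h2)

lemma sortPair_fst_mem {a b : Fin n} (p : Fin n × Fin n) (h : sortPair a b = p) :
    a = p.1 ∨ a = p.2 := by
  rcases sortPair_eq_iff p h with ⟨h1, _⟩ | ⟨h1, _⟩
  · exact Or.inl h1
  · exact Or.inr h1

lemma sortPair_snd_mem {a b : Fin n} (p : Fin n × Fin n) (h : sortPair a b = p) :
    b = p.1 ∨ b = p.2 := by
  rcases sortPair_eq_iff p h with ⟨_, h2⟩ | ⟨_, h2⟩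
  · exact Or.inr h2
  · exact Or.inl h2

lemma emb_two_restrict_card (R : Finset (Fin n)) (hR : R.card = k) {i j : Fin k} (hij : i < j) :
    (univ.filter (fun e' : Fin k ↪ Fin n => e' i ∈ R ∧ e' j ∈ R)).card
      ≤ (k * k - k) * n ^ (k - 2) := by
  have hijne : i ≠ j := ne_of_lt hij
  have hcards : Fintype.card {x : Fin k // x ≠ i ∧ x ≠ j} = k - 2 := by
    rw [Fintype.card_subtype]
    have hfe : (univ.filter (fun x : Fin k => x ≠ i ∧ x ≠ j))
        = univ \ ({i, j} : Finset (Fin k)) := by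
      ext x
      simp [Finset.mem_sdiff, Finset.mem_insert, Finset.mem_singleton]
    rw [hfe, Finset.card_sdiff_of_subset (Finset.subset_univ _), Finset.card_univ, Fintype.card_fin]
    have : ({i, j} : Finset (Fin k)).card = 2 := by
      rw [Finset.card_insert_of_notMem (by simpa using hijne), Finset.card_singleton]
    rw [this]
  have htarget : (R.offDiag ×ˢ (univ : Finset ({x : Fin k // x ≠ i ∧ x ≠ j} → Fin n))).card
      = (k * k - k) * n ^ (k - 2) := by
    rw [Finset.card_product, Finset.offDiag_card, hR, Finset.card_univ, Fintype.card_fun,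
      Fintype.card_fin, hcards]
  rw [← htarget]
  refine Finset.card_le_card_of_injOn
    (fun e' => ((e' i, e' j), fun x : {x : Fin k // x ≠ i ∧ x ≠ j} => e' x.1)) ?_ ?_
  · intro e' he'
    simp only [Finset.mem_coe, Finset.mem_filter] at he'
    refine Finset.mem_product.2 ⟨Finset.mem_offDiag.2 ⟨he'.2.1, he'.2.2, ?_⟩, Finset.mem_univ _⟩
    exact fun hh => hijne (e'.injective hh)
  · intro e1 h1 e2 h2 heq
    simp only [Prod.mk.injEq] at heq
    obtain ⟨⟨ha, hb⟩, hc⟩ := heq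
    apply DFunLike.ext
    intro x
    by_cases hx1 : x = i
    · rw [hx1]; exact ha
    · by_cases hx2 : x = j
      · rw [hx2]; exact hb
      · exact congrFun hc ⟨x, hx1, hx2⟩

lemma nbr_card (e : Fin k ↪ Fin n) :
    (univ.filter (fun e' : Fin k ↪ Fin n => ((vblOf n k e) ∩ (vblOf n k e')).Nonempty)).card
      ≤ k.choose 2 * ((k * k - k) * n ^ (k - 2)) := by
  set R : Finset (Fin n) := univ.image e with hRdef
  have hRcard : R.card = k := by
    rw [hRdef, Finset.card_image_of_injective _ e.injective, Finset.card_univ, Fintype.card_fin]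
  have hsub : (univ.filter (fun e' : Fin k ↪ Fin n => ((vblOf n k e) ∩ (vblOf n k e')).Nonempty))
      ⊆ (pairsLt k).biUnion
        (fun q => univ.filter (fun e' : Fin k ↪ Fin n => e' q.1 ∈ R ∧ e' q.2 ∈ R)) := by
    intro e' he'
    obtain ⟨p, hp⟩ := (Finset.mem_filter.1 he').2
    obtain ⟨hp1, hp2⟩ := Finset.mem_inter.1 hp
    obtain ⟨r, _, hre⟩ := Finset.mem_image.1 hp1
    obtain ⟨q, hq, hqe⟩ := Finset.mem_image.1 hp2
    have hpR : p.1 ∈ R ∧ p.2 ∈ R := by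
      constructor
      · rcases sortPair_eq_iff p hre with ⟨h1, h2⟩ | ⟨h1, h2⟩
        · rw [← h1]; exact Finset.mem_image_of_mem _ (Finset.mem_univ _)
        · rw [← h2]; exact Finset.mem_image_of_mem _ (Finset.mem_univ _)
      · rcases sortPair_eq_iff p hre with ⟨h1, h2⟩ | ⟨h1, h2⟩
        · rw [← h2]; exact Finset.mem_image_of_mem _ (Finset.mem_univ _)
        · rw [← h1]; exact Finset.mem_image_of_mem _ (Finset.mem_univ _)
    refine Finset.mem_biUnion.2 ⟨q, hq, Finset.mem_filter.2 ⟨Finset.mem_univ _, ?_, ?_⟩⟩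
    · rcases sortPair_fst_mem p hqe with h | h
      · rw [h]; exact hpR.1
      · rw [h]; exact hpR.2
    · rcases sortPair_snd_mem p hqe with h | h
      · rw [h]; exact hpR.1
      · rw [h]; exact hpR.2
  calc (univ.filter (fun e' : Fin k ↪ Fin n => ((vblOf n k e) ∩ (vblOf n k e')).Nonempty)).card
      ≤ ((pairsLt k).biUnion
        (fun q => univ.filter (fun e' : Fin k ↪ Fin n => e' q.1 ∈ R ∧ e' q.2 ∈ R))).card :=
        Finset.card_le_card hsub
    _ ≤ ∑ q ∈ pairsLt k,
        (univ.filter (fun e' : Fin k ↪ Fin n => e' q.1 ∈ R ∧ e' q.2 ∈ R)).card :=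
        Finset.card_biUnion_le
    _ ≤ ∑ _q ∈ pairsLt k, (k * k - k) * n ^ (k - 2) := by
        refine Finset.sum_le_sum ?_
        intro q hq
        have hqlt : q.1 < q.2 := (Finset.mem_filter.1 hq).2
        exact emb_two_restrict_card R hRcard hqlt
    _ = k.choose 2 * ((k * k - k) * n ^ (k - 2)) := by
        rw [Finset.sum_const, pairsLt_card, smul_eq_mul]


lemma rpow071 : (1.63 : ℝ) ≤ (2 : ℝ) ^ ((0.71 : ℝ)) := by
  have h2 : (0:ℝ) ≤ 2 := by norm_num
  have hb : (0:ℝ) ≤ (2:ℝ) ^ ((0.71:ℝ)) := Real.rpow_nonneg h2 _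
  have hpow : ((2:ℝ) ^ ((0.71:ℝ))) ^ (100 : ℕ) = (2:ℝ) ^ (71 : ℕ) := by
    rw [← Real.rpow_natCast ((2:ℝ) ^ ((0.71:ℝ))) 100, ← Real.rpow_mul h2,
      ← Real.rpow_natCast 2 71]
    norm_num
  refine le_of_pow_le_pow_left₀ (n := 100) (by norm_num) hb ?_
  rw [hpow]
  norm_num
  
lemma choose_two_arith (k : ℕ) : 2 * k.choose 2 = k * k - k := by
  rcases Nat.eq_zero_or_pos k with rfl | hk
  · simp
  · have hch := Nat.choose_two_right k
    have h2 : 2 ∣ k * (k - 1) := by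
      rcases Nat.even_or_odd k with he | ho
      · exact Dvd.dvd.mul_right he.two_dvd _
      · have : Even (k - 1) := by
          rcases ho with ⟨m, rfl⟩; exact ⟨m, by omega⟩
        exact Dvd.dvd.mul_left this.two_dvd _
    rw [hch, Nat.mul_div_cancel' h2]
    cases k with
    | zero => simp
    | succ m => simp [Nat.succ_sub_one]; ring_nf; omega

lemma xbound (D : ℕ) (hD : 1 ≤ D) (T : ℝ) (hT : 0 < T)
    (hcond : Real.exp 1 * ((D : ℝ) + 1) ≤ T) :
    1 / T ≤ (1 / ((D : ℝ) + 1)) * (1 - 1 / ((D : ℝ) + 1)) ^ D := by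
  have hd0 : (0:ℝ) < (D : ℝ) := by exact_mod_cast hD
  have hd1 : (0:ℝ) < (D : ℝ) + 1 := by linarith
  have hsub : 1 - 1 / ((D:ℝ) + 1) = (D:ℝ) / ((D:ℝ) + 1) := by field_simp; ring
  have h1 : ((1 : ℝ) + 1 / (D:ℝ)) ^ D ≤ Real.exp 1 := by
    have hle : (1 : ℝ) + 1 / (D:ℝ) ≤ Real.exp (1 / (D:ℝ)) := by
      have := Real.add_one_le_exp (1 / (D:ℝ))
      linarith
    calc ((1 : ℝ) + 1 / (D:ℝ)) ^ D ≤ (Real.exp (1 / (D:ℝ))) ^ D := by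
          exact pow_le_pow_left₀ (by positivity) hle D
      _ = Real.exp ((D : ℝ) * (1 / (D:ℝ))) := by
          rw [← Real.exp_nat_mul]
      _ = Real.exp 1 := by
          congr 1
          field_simp
  have hinv : ((D:ℝ) / ((D:ℝ) + 1)) ^ D = 1 / (((1:ℝ) + 1 / (D:ℝ)) ^ D) := by
    have e1 : (1:ℝ) + 1 / (D:ℝ) = ((D:ℝ) + 1) / (D:ℝ) := by field_simp
    rw [e1, one_div, ← inv_pow, inv_div]
  have hppos : (0:ℝ) < ((1:ℝ) + 1 / (D:ℝ)) ^ D := by positivity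
  have h2 : 1 / Real.exp 1 ≤ ((D:ℝ) / ((D:ℝ) + 1)) ^ D := by
    rw [hinv]
    exact one_div_le_one_div_of_le hppos h1
  rw [hsub]
  have hexp : (0:ℝ) < Real.exp 1 := Real.exp_pos 1
  calc 1 / T ≤ 1 / (Real.exp 1 * ((D:ℝ) + 1)) := by
        apply one_div_le_one_div_of_le
        · positivity
        · exact hcond
    _ = (1 / ((D:ℝ) + 1)) * (1 / Real.exp 1) := by
        rw [one_div_mul_one_div]
        ring_nf
    _ ≤ (1 / ((D:ℝ) + 1)) * ((D:ℝ) / ((D:ℝ) + 1)) ^ D := by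
        exact mul_le_mul_of_nonneg_left h2 (by positivity)

lemma analytic_main (n k : ℕ) (hk : 5 ≤ k) (hn : 2 * k ^ 2 ≤ n)
    (h : ((k : ℝ) - 2) * Real.logb 2 (n : ℝ) <
        (k : ℝ) * ((k : ℝ) - 1) / 2 - 4 * Real.logb 2 (k : ℝ) - 0.71) :
    Real.exp 1 * ((↑(k.choose 2 * ((k * k - k) * n ^ (k - 2))) : ℝ) + 1)
      ≤ (2 : ℝ) ^ (k.choose 2 : ℕ) := by
  have hkpos : (0:ℝ) < (k:ℝ) := by
    have : 0 < k := by omega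
    exact_mod_cast this
  have hnnat : 0 < n := by nlinarith [sq_nonneg k]
  have hnpos : (0:ℝ) < (n:ℝ) := by exact_mod_cast hnnat
  -- the real value of choose 2
  have hc2 : ((k.choose 2 : ℕ) : ℝ) = (k:ℝ) * ((k:ℝ) - 1) / 2 := by
    have h1 : 2 * k.choose 2 = k * k - k := choose_two_arith k
    have h2 : ((2 * k.choose 2 : ℕ) : ℝ) = ((k * k - k : ℕ) : ℝ) := by exact_mod_cast h1
    have hkk : k ≤ k * k := Nat.le_mul_of_pos_left k (by omega)
    rw [Nat.cast_mul, Nat.cast_sub (by omega : k ≤ k * k)] at h2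
    push_cast at h2
    linarith
  -- rearranged h
  have h' : ((k:ℝ) - 2) * Real.logb 2 (n:ℝ) + 4 * Real.logb 2 (k:ℝ) + 0.71
      < ((k.choose 2 : ℕ) : ℝ) := by
    rw [hc2]; linarith
  -- exponentiate
  have hexp : (2:ℝ) ^ (((k:ℝ) - 2) * Real.logb 2 (n:ℝ) + 4 * Real.logb 2 (k:ℝ) + (0.71:ℝ))
      < (2:ℝ) ^ (((k.choose 2 : ℕ) : ℝ)) :=
    (Real.rpow_lt_rpow_left_iff (by norm_num : (1:ℝ) < 2)).2 h'
  have h2nn : (0:ℝ) ≤ 2 := by norm_num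
  have hsplit : (2:ℝ) ^ (((k:ℝ) - 2) * Real.logb 2 (n:ℝ) + 4 * Real.logb 2 (k:ℝ) + (0.71:ℝ))
      = (n:ℝ) ^ (k - 2 : ℕ) * (k:ℝ) ^ (4 : ℕ) * (2:ℝ) ^ ((0.71:ℝ)) := by
    rw [Real.rpow_add (by norm_num : (0:ℝ) < 2), Real.rpow_add (by norm_num : (0:ℝ) < 2)]
    congr 1
    congr 1
    · -- 2 ^ ((k-2) * logb 2 n) = n ^ (k-2)
      have hcast : ((k:ℝ) - 2) = ((k - 2 : ℕ) : ℝ) := by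
        have : (2:ℕ) ≤ k := by omega
        push_cast [Nat.cast_sub this]
        ring
      rw [hcast, mul_comm, Real.rpow_mul h2nn, Real.rpow_logb (by norm_num) (by norm_num) hnpos,
        Real.rpow_natCast]
    · -- 2 ^ (4 * logb 2 k) = k ^ 4
      have : (4:ℝ) * Real.logb 2 (k:ℝ) = Real.logb 2 (k:ℝ) * ((4:ℕ):ℝ) := by push_cast; ring
      rw [this, Real.rpow_mul h2nn, Real.rpow_logb (by norm_num) (by norm_num) hkpos,
        Real.rpow_natCast]
  have hTnat : (2:ℝ) ^ (((k.choose 2 : ℕ) : ℝ)) = (2:ℝ) ^ (k.choose 2 : ℕ) :=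
    Real.rpow_natCast 2 _
  rw [hsplit, hTnat] at hexp
  set T : ℝ := (2:ℝ) ^ (k.choose 2 : ℕ) with hTdef
  set Q : ℝ := (n:ℝ) ^ (k - 2 : ℕ) * (k:ℝ) ^ (4 : ℕ) with hQdef
  have hQpos : 0 < Q := by positivity
  have hQT : Q * 1.63 ≤ T := by
    calc Q * 1.63 ≤ Q * (2:ℝ) ^ ((0.71:ℝ)) := by
          exact mul_le_mul_of_nonneg_left rpow071 (le_of_lt hQpos)
      _ ≤ T := le_of_lt hexp
  -- T ≥ 1024
  have hc2ge : 10 ≤ k.choose 2 := by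
    calc 10 = Nat.choose 5 2 := by decide
      _ ≤ k.choose 2 := Nat.choose_le_choose 2 hk
  have hTge : (1024:ℝ) ≤ T := by
    calc (1024:ℝ) = 2 ^ (10:ℕ) := by norm_num
      _ ≤ 2 ^ (k.choose 2 : ℕ) := by
          exact pow_le_pow_right₀ (by norm_num) hc2ge
  -- bound the nat cast : 2 * Dnat ≤ k^4 * n^(k-2) in ℕ
  have h2D : 2 * (k.choose 2 * ((k * k - k) * n ^ (k - 2))) ≤ k ^ 4 * n ^ (k - 2) := by
    rw [← mul_assoc, choose_two_arith]
    calc (k * k - k) * ((k * k - k) * n ^ (k - 2))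
        ≤ (k * k) * ((k * k) * n ^ (k - 2)) := by
          gcongr <;> exact Nat.sub_le _ _
      _ = k ^ 4 * n ^ (k - 2) := by ring
  have hDle : (↑(k.choose 2 * ((k * k - k) * n ^ (k - 2))) : ℝ) ≤ Q / 2 := by
    have hcast : ((2 * (k.choose 2 * ((k * k - k) * n ^ (k - 2))) : ℕ) : ℝ)
        ≤ ((k ^ 4 * n ^ (k - 2) : ℕ) : ℝ) := by exact_mod_cast h2D
    push_cast at hcast
    rw [hQdef]
    push_cast
    linarith
  have he : Real.exp 1 ≤ 2.7182818286 := le_of_lt Real.exp_one_lt_d9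
  have hD1 : (0:ℝ) ≤ (↑(k.choose 2 * ((k * k - k) * n ^ (k - 2))) : ℝ) + 1 := by positivity
  have hmul : Real.exp 1 * ((↑(k.choose 2 * ((k * k - k) * n ^ (k - 2))) : ℝ) + 1)
      ≤ 2.7182818286 * ((↑(k.choose 2 * ((k * k - k) * n ^ (k - 2))) : ℝ) + 1) :=
    mul_le_mul_of_nonneg_right he hD1
  linarith

theorem stmt18 (n k : ℕ) (hk : 5 ≤ k) (hn : 2 * k ^ 2 ≤ n)
    (h : ((k : ℝ) - 2) * Real.logb 2 (n : ℝ) <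
        (k : ℝ) * ((k : ℝ) - 1) / 2 - 4 * Real.logb 2 (k : ℝ) - 0.71) :
    ∃ T : Tournament n, ∀ S : Finset (Fin n), S.card = k →
      ¬ T.HasTransTournOn S := by
  classical
  have hnnat : 0 < n := by
    have h5 : 5 ^ 2 ≤ k ^ 2 := Nat.pow_le_pow_left hk 2
    omega
  have hc2ge : 10 ≤ k.choose 2 := by
    calc 10 = Nat.choose 5 2 := by decide
      _ ≤ k.choose 2 := Nat.choose_le_choose 2 hk
  have hkkk : 20 ≤ k * k - k := by
    have h1 : 5 * 4 ≤ k * (k - 1) := Nat.mul_le_mul hk (by omega)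
    have h2 : k * (k - 1) = k * k - k := by
      cases k with
      | zero => simp
      | succ m =>
          have : (m + 1) * (m + 1) = (m + 1) * m + (m + 1) := by ring
          simp only [Nat.succ_sub_one]
          omega
    omega
  set D : ℕ := k.choose 2 * ((k * k - k) * n ^ (k - 2)) with hDdef
  have hDone : 1 ≤ D := by
    have h1 : 0 < k.choose 2 := by omega
    have h2 : 0 < k * k - k := by omega
    have h3 : 0 < n ^ (k - 2) := pow_pos hnnat _
    have : 0 < D := by rw [hDdef]; exact Nat.mul_pos h1 (Nat.mul_pos h2 h3)
    omega
  set x : ℝ := 1 / ((D : ℝ) + 1) with hxdef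
  have hDr : (1:ℝ) ≤ (D : ℝ) := by exact_mod_cast hDone
  have hx0 : 0 < x := by rw [hxdef]; positivity
  have hx1 : x < 1 := by
    rw [hxdef]
    rw [div_lt_one (by linarith)]
    linarith
  set T : ℝ := (2:ℝ) ^ (k.choose 2 : ℕ) with hTdef
  have hTpos : (0:ℝ) < T := by rw [hTdef]; positivity
  have hanalytic : Real.exp 1 * ((D : ℝ) + 1) ≤ T := analytic_main n k hk hn h
  have hxb : 1 / T ≤ x * (1 - x) ^ D := xbound D hDone T hTpos hanalytic
  have hp : ∀ e : Fin k ↪ Fin n, ((evA n k e).card : ℝ)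
      ≤ x * (1 - x) ^ D * 2 ^ (Fintype.card (Fin n × Fin n)) := by
    intro e
    have hcyl := cylinder_card_le (evA n k e) (vblOf n k e) (evA_pinned e)
    rw [vblOf_card] at hcyl
    have hreal : ((evA n k e).card : ℝ) * T ≤ 2 ^ (Fintype.card (Fin n × Fin n)) := by
      have hc : (((evA n k e).card * 2 ^ (k.choose 2) : ℕ) : ℝ)
          ≤ ((2 ^ (Fintype.card (Fin n × Fin n)) : ℕ) : ℝ) := by exact_mod_cast hcyl
      push_cast at hc
      rw [hTdef]
      convert hc using 2
    have h2M : (0:ℝ) < 2 ^ (Fintype.card (Fin n × Fin n)) := by positivity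
    calc ((evA n k e).card : ℝ)
        = ((evA n k e).card : ℝ) * T / T := by field_simp
      _ ≤ 2 ^ (Fintype.card (Fin n × Fin n)) / T := by
          exact div_le_div_of_nonneg_right hreal hTpos.le |>.trans_eq rfl
      _ = (1 / T) * 2 ^ (Fintype.card (Fin n × Fin n)) := by ring
      _ ≤ x * (1 - x) ^ D * 2 ^ (Fintype.card (Fin n × Fin n)) := by
          exact mul_le_mul_of_nonneg_right hxb (le_of_lt h2M)
  have hdet : ∀ e : Fin k ↪ Fin n, ∀ ω ω' : (Fin n × Fin n) → Bool,
      (∀ p ∈ vblOf n k e, ω p = ω' p) → (ω ∈ evA n k e ↔ ω' ∈ evA n k e) :=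
    fun e ω ω' hh => evA_det e ω ω' hh
  have hN : ∀ e : Fin k ↪ Fin n,
      (univ.filter (fun e' => ((vblOf n k e) ∩ (vblOf n k e')).Nonempty)).card ≤ D :=
    fun e => nbr_card e
  obtain ⟨ω, hω⟩ := lll_exists (evA n k) (vblOf n k) hdet D x hx0 hx1 hN hp
  refine ⟨tournOf ω, ?_⟩
  intro S hS hTT
  obtain ⟨l, hnd, hts, hpw⟩ := hTT
  have hlen : l.length = k := by
    rw [← List.toFinset_card_of_nodup hnd, hts, hS]
  have hinj : Function.Injective (fun i : Fin k => l.get (Fin.cast hlen.symm i)) := by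
    intro i j hij
    have := (List.nodup_iff_injective_get.1 hnd) hij
    exact Fin.cast_injective hlen.symm this
  set e : Fin k ↪ Fin n := ⟨fun i => l.get (Fin.cast hlen.symm i), hinj⟩ with hedef
  apply hω e
  have hmem : ω ∈ evA n k e := by
    rw [evA, Finset.mem_filter]
    refine ⟨Finset.mem_univ _, ?_⟩
    intro i j hij
    have hget := List.pairwise_iff_get.1 hpw (Fin.cast hlen.symm i) (Fin.cast hlen.symm j)
      (by rw [Fin.lt_def, Fin.coe_cast, Fin.coe_cast]; exact hij)
    exact hget
  exact hmem
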